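/- In the proof of the relative vanishing theorem: let π: X' → X be a finite surjective Galois morphism of smooth projective varieties, étale over X \ B for a normal crossing divisor B = Σ_i B_i with B' = π^{-1}(B) normal crossing, and let L be a ℚ-divisor on X with fractional part supported on B such that π^* L has integral coefficients. Fix t = (t_1,…,t_h) and let A be the largest divisor on X such that π^* A ≤ ⌈−Σ_{i'} B'_{i'} − Σ_i (1 − t_i) π^* B_i⌉ + π^*(B + L). Then A = ⌈L − Σ_i (1 − t_i) B_i⌉. -/

import Mathlib

open scoped BigOperators

/-- the divisor computation in the proof of the relative
vanishing theorem, Theorem 4.2.  Here `π : X' → X` is a finite surjective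
Galois morphism of smooth projective varieties, étale over `X \ B` for a
normal crossing divisor `B = Σ_i B_i`, with `B' = π⁻¹(B) = Σ_{i'} B'_{i'}`
normal crossing; `ι` indexes the branches `B_i`, `ι'` indexes the branches
`B'_{i'}`, and `m i i'` is the multiplicity of `B'_{i'}` in `π^* B_i` (so
every `B'_{i'}` lies over `B`, and every `B_i` has a branch of `B'` lying
generically over it); `l i` is the (rational) coefficient of `L` along `B_i`
(the fractional part of `L` is supported on `B`, and `π^* L` has integral
coefficients, i.e. `Σ_i l_i m_{ii'} ∈ ℤ` for every `i'`).  The coefficientwise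
statement of `A = ⌈L - Σ_i (1 - t_i) B_i⌉`, where `A` is the largest divisor
on `X` with `π^* A ≤ ⌈-Σ_{i'} B'_{i'} - Σ_i (1 - t_i) π^* B_i⌉ + π^*(B + L)`:
the family of coefficients `a i = ⌈l i - (1 - t i)⌉` is the greatest element
of the set of integral coefficient families satisfying, for every `i'`,
`Σ_i a_i m_{ii'} ≤ ⌈-1 - Σ_i (1 - t_i) m_{ii'}⌉ + Σ_i m_{ii'} + Σ_i l_i m_{ii'}`. -/
theorem statement15 (ι ι' : Type) [Fintype ι] [Fintype ι']
    (m : ι → ι' → ℕ)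
    (hcover : ∀ i' : ι', ∃ i : ι, 0 < m i i')
    (hgeneric : ∀ i : ι, ∃ i' : ι', 0 < m i i' ∧ ∀ j : ι, j ≠ i → m j i' = 0)
    (l : ι → ℚ) (t : ι → ℝ)
    (hintegral : ∀ i' : ι', ∃ z : ℤ, (∑ i, (l i : ℝ) * (m i i' : ℝ)) = (z : ℝ)) :
    IsGreatest
      {a : ι → ℤ | ∀ i' : ι',
        (∑ i, (a i : ℝ) * (m i i' : ℝ)) ≤
          (⌈(-1 : ℝ) - ∑ i, (1 - t i) * (m i i' : ℝ)⌉ : ℝ)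
            + (∑ i, (m i i' : ℝ)) + ∑ i, (l i : ℝ) * (m i i' : ℝ)}
      (fun i => ⌈(l i : ℝ) - (1 - t i)⌉) := by
  constructor
  · intro i'
    obtain ⟨z, hz⟩ := hintegral i'
    obtain ⟨i0, hi0⟩ := hcover i'
    -- strict inequality on the real sums
    have hstrict : (∑ i, ((⌈(l i : ℝ) - (1 - t i)⌉ : ℝ)) * (m i i' : ℝ))
        < ∑ i, ((l i : ℝ) - (1 - t i) + 1) * (m i i' : ℝ) := by
      apply Finset.sum_lt_sum
      · intro i _
        have h1 : (⌈(l i : ℝ) - (1 - t i)⌉ : ℝ) < (l i : ℝ) - (1 - t i) + 1 :=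
          Int.ceil_lt_add_one _
        have h2 : (0:ℝ) ≤ (m i i' : ℝ) := by positivity
        nlinarith
      · refine ⟨i0, Finset.mem_univ _, ?_⟩
        have h1 : (⌈(l i0 : ℝ) - (1 - t i0)⌉ : ℝ) < (l i0 : ℝ) - (1 - t i0) + 1 :=
          Int.ceil_lt_add_one _
        have h2 : (0:ℝ) < (m i0 i' : ℝ) := by exact_mod_cast hi0
        nlinarith
    have hexp : (∑ i, ((l i : ℝ) - (1 - t i) + 1) * (m i i' : ℝ))
        = (∑ i, (l i : ℝ) * (m i i' : ℝ)) - (∑ i, (1 - t i) * (m i i' : ℝ))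
          + ∑ i, (m i i' : ℝ) := by
      rw [← Finset.sum_sub_distrib, ← Finset.sum_add_distrib]
      exact Finset.sum_congr rfl (fun i _ => by ring)
    set w : ℤ := (∑ i, ⌈(l i : ℝ) - (1 - t i)⌉ * (m i i' : ℤ)) - (∑ i, (m i i' : ℤ)) - z
      with hw
    have hwcast : (w : ℝ) = (∑ i, ((⌈(l i : ℝ) - (1 - t i)⌉ : ℝ)) * (m i i' : ℝ))
        - (∑ i, (m i i' : ℝ)) - (z : ℝ) := by
      rw [hw]; push_cast; ring
    have hwlt : (w : ℝ) < -∑ i, (1 - t i) * (m i i' : ℝ) := by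
      rw [hwcast]; rw [hexp] at hstrict; linarith [hz, hstrict]
    have hceil : w - 1 < ⌈(-1 : ℝ) - ∑ i, (1 - t i) * (m i i' : ℝ)⌉ := by
      apply Int.lt_ceil.mpr
      push_cast
      linarith
    have hwle : w ≤ ⌈(-1 : ℝ) - ∑ i, (1 - t i) * (m i i' : ℝ)⌉ := by omega
    have hfinal : ((⌈(-1 : ℝ) - ∑ i, (1 - t i) * (m i i' : ℝ)⌉ : ℝ)) ≥ (w : ℝ) := by
      exact_mod_cast hwle
    rw [hz]
    have : (∑ i, ((⌈(l i : ℝ) - (1 - t i)⌉ : ℝ)) * (m i i' : ℝ))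
        = (w : ℝ) + (∑ i, (m i i' : ℝ)) + (z : ℝ) := by rw [hwcast]; ring
    rw [this]
    linarith
  · intro a ha i
    obtain ⟨i', hM, hzero⟩ := hgeneric i
    have h := ha i'
    obtain ⟨z, hz⟩ := hintegral i'
    have hsum : ∀ f : ι → ℝ, (∑ j, f j * (m j i' : ℝ)) = f i * (m i i' : ℝ) := by
      intro f
      apply Finset.sum_eq_single_of_mem i (Finset.mem_univ i)
      intro j _ hj
      rw [hzero j hj]
      simp
    rw [hsum, hsum (fun j => (l j : ℝ)), hsum (fun j => 1 - t j)] at h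
    have hsum2 : (∑ j, ((m j i' : ℝ))) = (m i i' : ℝ) := by
      apply Finset.sum_eq_single_of_mem i (Finset.mem_univ i)
      intro j _ hj
      rw [hzero j hj]; simp
    rw [hsum2] at h
    have hMpos : (0:ℝ) < (m i i' : ℝ) := by exact_mod_cast hM
    have hceil : (⌈(-1 : ℝ) - (1 - t i) * (m i i' : ℝ)⌉ : ℝ)
        < (-1 : ℝ) - (1 - t i) * (m i i' : ℝ) + 1 := Int.ceil_lt_add_one _
    have hmul : ((a i : ℝ) - 1) * (m i i' : ℝ)
        < ((l i : ℝ) - (1 - t i)) * (m i i' : ℝ) := by nlinarith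
    have hdiv : (a i : ℝ) - 1 < (l i : ℝ) - (1 - t i) :=
      lt_of_mul_lt_mul_right hmul hMpos.le
    have : a i - 1 < ⌈(l i : ℝ) - (1 - t i)⌉ := by
      apply Int.lt_ceil.mpr
      push_cast
      linarith
    exact Int.sub_one_lt_iff.mp this
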